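/- Let (c_j)_{j≥1} be a sequence of nonnegative reals and c_0 ≥ 2 an integer, and suppose there exist C > 1 and ε_0 > 0 with c_j ε_0^j < C for all j ≥ 1. Let (m_j)_{j≥0} be nonnegative reals satisfying (j − c_0) m_j ≤ ∑_{k=0}^{j−1} m_k c_{j−k} for all j > c_0. Then for any δ ≤ ε_0/(2C), setting D = ∑_{k=0}^{c_0} m_k δ^k, one has m_j δ^j ≤ D·2^{c_0 − j} for all j ≥ c_0; in particular the power series ∑ m_j z^j has positive radius of convergence. -/

import Mathlib

open Finset

/-- Convergence estimate for the gauge-fixing theorem: if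
`(j - c₀) mⱼ ≤ ∑_{k<j} m_k c_{j-k}` for `j > c₀` and `c_j ε₀^j < C`, then for
`δ ≤ ε₀/(2C)` and `D = ∑_{k ≤ c₀} m_k δ^k` one has `m_j δ^j ≤ D 2^{c₀-j}` for
`j ≥ c₀`; in particular `∑ m_j δ^j` converges. -/
theorem gauge_convergence_estimate
    (c : ℕ → ℝ) (m : ℕ → ℝ) (c₀ : ℕ) (C ε₀ δ : ℝ)
    (hc₀ : 2 ≤ c₀)
    (hc : ∀ j : ℕ, 1 ≤ j → 0 ≤ c j)
    (hm : ∀ j, 0 ≤ m j)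
    (hC : 1 < C) (hε₀ : 0 < ε₀)
    (hcC : ∀ j : ℕ, 1 ≤ j → c j * ε₀ ^ j < C)
    (hrec : ∀ j : ℕ, c₀ < j →
      ((j : ℝ) - (c₀ : ℝ)) * m j ≤ ∑ k ∈ Finset.range j, m k * c (j - k))
    (hδ0 : 0 ≤ δ) (hδ : δ ≤ ε₀ / (2 * C)) :
    (∀ j : ℕ, c₀ ≤ j →
      m j * δ ^ j ≤ (∑ k ∈ Finset.range (c₀ + 1), m k * δ ^ k) *
        (2 : ℝ) ^ ((c₀ : ℤ) - (j : ℤ))) ∧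
    Summable (fun j => m j * δ ^ j) := by
  set D : ℝ := ∑ k ∈ Finset.range (c₀ + 1), m k * δ ^ k with hD
  have hC0 : (0:ℝ) < C := lt_trans one_pos hC
  have hDnn : 0 ≤ D := Finset.sum_nonneg fun k _ => mul_nonneg (hm k) (pow_nonneg hδ0 k)
  -- key estimate on c n * δ ^ n
  have hcd : ∀ n : ℕ, 1 ≤ n → c n * δ ^ n ≤ (1/2 : ℝ) ^ n := by
    intro n hn
    have h1 : c n * δ ^ n ≤ c n * (ε₀ / (2 * C)) ^ n :=
      mul_le_mul_of_nonneg_left (pow_le_pow_left₀ hδ0 hδ n) (hc n hn)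
    have h2C : (0:ℝ) < 2 * C := by linarith
    have h2 : c n * (ε₀ / (2 * C)) ^ n = c n * ε₀ ^ n / (2 * C) ^ n := by
      rw [div_pow]; ring
    have h3 : c n * ε₀ ^ n / (2 * C) ^ n ≤ C / (2 * C) ^ n := by
      gcongr
      exact (hcC n hn).le
    have h4 : C / (2 * C) ^ n ≤ (1/2 : ℝ) ^ n := by
      rw [mul_pow, div_pow, one_pow]
      rw [div_le_div_iff₀ (by positivity) (by positivity)]
      have hCn : C ≤ C ^ n := le_self_pow₀ (le_of_lt hC) (Nat.one_le_iff_ne_zero.mp hn)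
      have h2n : (0:ℝ) < 2 ^ n := by positivity
      have := mul_le_mul_of_nonneg_right hCn (le_of_lt h2n)
      nlinarith [this]
    calc c n * δ ^ n ≤ c n * (ε₀ / (2 * C)) ^ n := h1
      _ = c n * ε₀ ^ n / (2 * C) ^ n := h2
      _ ≤ C / (2 * C) ^ n := h3
      _ ≤ (1/2 : ℝ) ^ n := h4
  have hhalf : (0:ℝ) ≤ 1/2 := by norm_num
  -- main induction
  have key : ∀ j : ℕ, c₀ ≤ j → m j * δ ^ j ≤ D * (1/2 : ℝ) ^ (j - c₀) := by
    intro j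
    induction j using Nat.strong_induction_on with
    | _ j ih =>
      intro hj
      rcases eq_or_lt_of_le hj with heq | hlt
      · subst heq
        simp only [Nat.sub_self, pow_zero, mul_one]
        exact Finset.single_le_sum (f := fun k => m k * δ ^ k)
          (fun k _ => mul_nonneg (hm k) (pow_nonneg hδ0 k))
          (Finset.mem_range.mpr (Nat.lt_succ_self _))
      · have hrec' := hrec j hlt
        have hjc : 1 ≤ j - c₀ := Nat.one_le_iff_ne_zero.mpr (Nat.sub_ne_zero_of_lt hlt)
        -- multiply recurrence by δ ^ j
        have step1 : ((j:ℝ) - (c₀:ℝ)) * (m j * δ ^ j) ≤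
            ∑ k ∈ Finset.range j, (m k * δ ^ k) * (c (j - k) * δ ^ (j - k)) := by
          have := mul_le_mul_of_nonneg_right hrec' (pow_nonneg hδ0 j)
          rw [Finset.sum_mul] at this
          calc ((j:ℝ) - (c₀:ℝ)) * (m j * δ ^ j) = ((j:ℝ) - (c₀:ℝ)) * m j * δ ^ j := by ring
            _ ≤ ∑ k ∈ Finset.range j, m k * c (j - k) * δ ^ j := this
            _ = ∑ k ∈ Finset.range j, (m k * δ ^ k) * (c (j - k) * δ ^ (j - k)) := by
                apply Finset.sum_congr rfl
                intro k hk
                have hkj : k ≤ j := le_of_lt (Finset.mem_range.mp hk)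
                rw [show δ ^ j = δ ^ k * δ ^ (j - k) by
                  rw [← pow_add, Nat.add_sub_cancel' hkj]]
                ring
        have step2 : ∑ k ∈ Finset.range j, (m k * δ ^ k) * (c (j - k) * δ ^ (j - k)) ≤
            ∑ k ∈ Finset.range j, (m k * δ ^ k) * (1/2 : ℝ) ^ (j - k) := by
          apply Finset.sum_le_sum
          intro k hk
          have hkj : k < j := Finset.mem_range.mp hk
          exact mul_le_mul_of_nonneg_left
            (hcd (j - k) (Nat.one_le_iff_ne_zero.mpr (Nat.sub_ne_zero_of_lt hkj)))
            (mul_nonneg (hm k) (pow_nonneg hδ0 k))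
        -- split the sum
        have hsplit : Finset.range j = Finset.range (c₀ + 1) ∪ Finset.Ico (c₀ + 1) j := by
          rw [Finset.range_eq_Ico, Finset.range_eq_Ico]
          exact (Finset.Ico_union_Ico_eq_Ico (Nat.zero_le _) hlt).symm
        have hdisj : Disjoint (Finset.range (c₀ + 1)) (Finset.Ico (c₀ + 1) j) := by
          rw [Finset.range_eq_Ico]
          exact Finset.Ico_disjoint_Ico_consecutive 0 (c₀+1) j
        have step3 : ∑ k ∈ Finset.range j, (m k * δ ^ k) * (1/2 : ℝ) ^ (j - k) ≤
            ((j:ℝ) - (c₀:ℝ)) * (D * (1/2 : ℝ) ^ (j - c₀)) := by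
          rw [hsplit, Finset.sum_union hdisj]
          have part1 : ∑ k ∈ Finset.range (c₀ + 1), (m k * δ ^ k) * (1/2 : ℝ) ^ (j - k) ≤
              D * (1/2 : ℝ) ^ (j - c₀) := by
            rw [hD, Finset.sum_mul]
            apply Finset.sum_le_sum
            intro k hk
            have hk' : k ≤ c₀ := Nat.lt_succ_iff.mp (Finset.mem_range.mp hk)
            apply mul_le_mul_of_nonneg_left _ (mul_nonneg (hm k) (pow_nonneg hδ0 k))
            exact pow_le_pow_of_le_one hhalf (by norm_num) (Nat.sub_le_sub_left hk' j)
          have part2 : ∑ k ∈ Finset.Ico (c₀ + 1) j, (m k * δ ^ k) * (1/2 : ℝ) ^ (j - k) ≤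
              ((j:ℝ) - (c₀:ℝ) - 1) * (D * (1/2 : ℝ) ^ (j - c₀)) := by
            have hbd : ∀ k ∈ Finset.Ico (c₀ + 1) j,
                (m k * δ ^ k) * (1/2 : ℝ) ^ (j - k) ≤ D * (1/2 : ℝ) ^ (j - c₀) := by
              intro k hk
              obtain ⟨hk1, hk2⟩ := Finset.mem_Ico.mp hk
              have hc₀k : c₀ ≤ k := le_of_lt hk1
              have ihk := ih k hk2 hc₀k
              calc (m k * δ ^ k) * (1/2 : ℝ) ^ (j - k)
                  ≤ (D * (1/2 : ℝ) ^ (k - c₀)) * (1/2 : ℝ) ^ (j - k) :=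
                    mul_le_mul_of_nonneg_right ihk (pow_nonneg hhalf _)
                _ = D * (1/2 : ℝ) ^ (j - c₀) := by
                    rw [mul_assoc, ← pow_add]
                    congr 2
                    omega
            calc ∑ k ∈ Finset.Ico (c₀ + 1) j, (m k * δ ^ k) * (1/2 : ℝ) ^ (j - k)
                ≤ ∑ _k ∈ Finset.Ico (c₀ + 1) j, D * (1/2 : ℝ) ^ (j - c₀) :=
                  Finset.sum_le_sum hbd
              _ = ((j : ℝ) - (c₀:ℝ) - 1) * (D * (1/2 : ℝ) ^ (j - c₀)) := by
                  rw [Finset.sum_const, Nat.card_Ico, nsmul_eq_mul]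
                  congr 1
                  have : ((j - (c₀ + 1) : ℕ) : ℝ) = (j:ℝ) - (c₀:ℝ) - 1 := by
                    have h1 : c₀ + 1 ≤ j := hlt
                    push_cast [Nat.cast_sub h1]
                    ring
                  rw [this]
          have hring : ((j:ℝ) - (c₀:ℝ)) * (D * (1/2 : ℝ) ^ (j - c₀)) =
              D * (1/2 : ℝ) ^ (j - c₀) + ((j:ℝ) - (c₀:ℝ) - 1) * (D * (1/2 : ℝ) ^ (j - c₀)) := by
            ring
          linarith [part1, part2]
        have hpos : (0:ℝ) < (j:ℝ) - (c₀:ℝ) := by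
          have : (c₀:ℝ) < (j:ℝ) := Nat.cast_lt.mpr hlt
          linarith
        have := le_trans step1 (le_trans step2 step3)
        exact le_of_mul_le_mul_left this hpos
  constructor
  · intro j hj
    have hkey := key j hj
    have hz : (2 : ℝ) ^ ((c₀ : ℤ) - (j : ℤ)) = (1/2 : ℝ) ^ (j - c₀) := by
      have h1 : (c₀ : ℤ) - (j : ℤ) = -((j - c₀ : ℕ) : ℤ) := by
        push_cast [Nat.cast_sub hj]; ring
      rw [h1, zpow_neg, zpow_natCast, one_div, inv_pow]
    rw [hz]
    exact hkey
  · rw [← summable_nat_add_iff c₀]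
    have hsum : Summable (fun n : ℕ => D * (1/2 : ℝ) ^ n) :=
      (summable_geometric_of_lt_one hhalf (by norm_num)).mul_left D
    exact Summable.of_nonneg_of_le
      (fun n => mul_nonneg (hm _) (pow_nonneg hδ0 _))
      (fun n => by
        have h := key (n + c₀) (Nat.le_add_left c₀ n)
        rwa [Nat.add_sub_cancel] at h)
      hsum
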